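/- Let d ≥ 2, let {e_n}_{n=1}^{N} be a family of N mutually unbiased orthonormal bases of ℂ^d with projections Π_{nk}, and let ρ be a density matrix on ℂ^d (positive semidefinite with trace 1). Setting p_{nk} = tr(Π_{nk} ρ), the probabilities satisfy Σ_{n=1}^{N} Σ_{k=1}^{d} p_{nk}² ≤ tr(ρ²) + 1. -/

import Mathlib

open scoped BigOperators ComplexOrder

/-- Rank-one orthogonal projection `|v⟩⟨v|` onto a vector `v ∈ ℂ^d`, as a matrix. -/
noncomputable def proj {d : ℕ} (v : EuclideanSpace ℂ (Fin d)) : Matrix (Fin d) (Fin d) ℂ :=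
  Matrix.of fun i j => v i * star (v j)

/-- A family of orthonormal bases of `ℂ^d` is mutually unbiased if
`|⟨e n k, e m l⟩|² = 1/d` for all `n ≠ m` and all `k, l`. -/
def MutuallyUnbiased {d N : ℕ} (e : Fin N → Fin d → EuclideanSpace ℂ (Fin d)) : Prop :=
  ∀ n m : Fin N, n ≠ m → ∀ k l : Fin d,
    ‖(inner ℂ (e n k) (e m l) : ℂ)‖ ^ 2 = 1 / d

noncomputable def vec (d : ℕ) (A : Matrix (Fin d) (Fin d) ℂ) :
    EuclideanSpace ℂ (Fin d × Fin d) := WithLp.toLp 2 (fun q : Fin d × Fin d => A q.1 q.2)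

lemma inner_vec {d : ℕ} (A B : Matrix (Fin d) (Fin d) ℂ) :
    (inner ℂ (vec d A) (vec d B) : ℂ) = ∑ i, ∑ j, (starRingEnd ℂ) (A i j) * B i j := by
  simp [vec, PiLp.inner_apply, Fintype.sum_prod_type, mul_comm]

lemma inner_vec_proj {d : ℕ} (v u : EuclideanSpace ℂ (Fin d)) :
    (inner ℂ (vec d (proj v)) (vec d (proj u)) : ℂ)
      = (inner ℂ v u : ℂ) * (starRingEnd ℂ) (inner ℂ v u : ℂ) := by
  rw [inner_vec]
  simp only [PiLp.inner_apply, RCLike.inner_apply, map_sum, map_mul, RCLike.star_def,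
    Complex.conj_conj]
  rw [Finset.sum_mul_sum]
  refine Finset.sum_congr rfl fun i _ => Finset.sum_congr rfl fun j _ => ?_
  simp only [proj, Matrix.of_apply, map_mul, RCLike.star_def, Complex.conj_conj]
  ring

lemma inner_vec_proj_norm {d : ℕ} (v u : EuclideanSpace ℂ (Fin d)) :
    (inner ℂ (vec d (proj v)) (vec d (proj u)) : ℂ)
      = ((‖(inner ℂ v u : ℂ)‖ ^ 2 : ℝ) : ℂ) := by
  rw [inner_vec_proj, Complex.mul_conj, Complex.normSq_eq_norm_sq]

lemma inner_vec_proj_rho {d : ℕ} (v : EuclideanSpace ℂ (Fin d)) (ρ : Matrix (Fin d) (Fin d) ℂ) :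
    (inner ℂ (vec d (proj v)) (vec d ρ) : ℂ) = (proj v * ρ).trace := by
  rw [inner_vec]
  simp only [Matrix.trace, Matrix.diag, Matrix.mul_apply]
  rw [Finset.sum_comm]
  refine Finset.sum_congr rfl fun j _ => Finset.sum_congr rfl fun i _ => ?_
  simp only [proj, Matrix.of_apply, map_mul, RCLike.star_def, Complex.conj_conj]
  ring

lemma inner_vec_proj_one {d : ℕ} (v : EuclideanSpace ℂ (Fin d)) :
    (inner ℂ (vec d (proj v)) (vec d 1) : ℂ) = (inner ℂ v v : ℂ) := by
  rw [inner_vec]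
  simp only [Matrix.one_apply, mul_ite, mul_one, mul_zero, Finset.sum_ite_eq, Finset.mem_univ,
    if_true]
  simp only [proj, Matrix.of_apply, PiLp.inner_apply, RCLike.inner_apply, map_mul, RCLike.star_def,
    Complex.conj_conj]
  refine Finset.sum_congr rfl fun i _ => ?_
  ring

lemma inner_vec_one_one {d : ℕ} : (inner ℂ (vec d 1) (vec d 1) : ℂ) = (d : ℂ) := by
  rw [inner_vec]
  simp [Matrix.one_apply, apply_ite]

lemma inner_vec_one_rho {d : ℕ} (ρ : Matrix (Fin d) (Fin d) ℂ) :
    (inner ℂ (vec d 1) (vec d ρ) : ℂ) = ρ.trace := by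
  rw [inner_vec]
  simp [Matrix.one_apply, apply_ite, Matrix.trace]

lemma exists_c (d : ℕ) (hd : 2 ≤ d) :
    ∃ c : Fin (d-1) → EuclideanSpace ℂ (Fin d),
      (∀ j l, (inner ℂ (c j) (c l) : ℂ) = if j = l then 1 else 0) ∧
      (∀ j, ∑ k, c j k = 0) ∧
      (∀ y : EuclideanSpace ℂ (Fin d),
        ∑ j, ‖(inner ℂ (c j) y : ℂ)‖ ^ 2 = ‖y‖ ^ 2 - ‖∑ k, y k‖ ^ 2 / d) := by
  classical
  have hd0 : (0:ℝ) < d := by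
    have : 0 < d := by omega
    exact_mod_cast this
  set sd := Real.sqrt d with hsd
  have hsd0 : 0 < sd := Real.sqrt_pos.mpr hd0
  have hsd2 : sd * sd = d := Real.mul_self_sqrt hd0.le
  have hsdC : (sd:ℂ) * (sd:ℂ) = (d:ℂ) := by exact_mod_cast hsd2
  have hsdne : (sd:ℂ) ≠ 0 := by exact_mod_cast hsd0.ne'
  set w : EuclideanSpace ℂ (Fin d) := WithLp.toLp 2 (fun _ => ((sd⁻¹ : ℝ) : ℂ)) with hw
  have hwy : ∀ y : EuclideanSpace ℂ (Fin d),
      (inner ℂ w y : ℂ) = ((sd⁻¹:ℝ):ℂ) * ∑ k, y k := by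
    intro y
    simp [PiLp.inner_apply, RCLike.inner_apply, hw, Complex.conj_ofReal, Finset.sum_mul, mul_comm]
  have hww : (inner ℂ w w : ℂ) = 1 := by
    rw [hwy]
    simp only [hw, Finset.sum_const, Finset.card_univ, Fintype.card_fin, nsmul_eq_mul]
    push_cast
    field_simp
    linear_combination -hsdC
  have hw0 : w ≠ 0 := by
    intro h
    rw [h, inner_zero_right] at hww
    exact one_ne_zero hww.symm
  haveI : Fact (Module.finrank ℂ (EuclideanSpace ℂ (Fin d)) = (d-1) + 1) :=
    ⟨by rw [finrank_euclideanSpace, Fintype.card_fin]; omega⟩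
  set b := OrthonormalBasis.fromOrthogonalSpanSingleton (𝕜 := ℂ) (d-1) hw0 with hb
  set c : Fin (d-1) → EuclideanSpace ℂ (Fin d) := fun j => (b j : EuclideanSpace ℂ (Fin d))
    with hc
  have hcc : ∀ j l, (inner ℂ (c j) (c l) : ℂ) = if j = l then 1 else 0 := by
    intro j l
    have := orthonormal_iff_ite.mp b.orthonormal j l
    rwa [Submodule.coe_inner] at this
  have hwc : ∀ j, (inner ℂ w (c j) : ℂ) = 0 := by
    intro j
    exact ((Submodule.mem_orthogonal _ _).mp (b j).2) w (Submodule.mem_span_singleton_self w)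
  have hcsum : ∀ j, ∑ k, c j k = 0 := by
    intro j
    have h := hwc j
    rw [hwy] at h
    have hne : ((sd⁻¹:ℝ):ℂ) ≠ 0 := by
      push_cast
      exact inv_ne_zero hsdne
    exact (mul_eq_zero.mp h).resolve_left hne
  -- orthonormal basis of E extending c with w
  set f : Fin (d-1) ⊕ Unit → EuclideanSpace ℂ (Fin d) := Sum.elim c (fun _ => w) with hf
  have hforth : Orthonormal ℂ f := by
    rw [orthonormal_iff_ite]
    rintro (j | ⟨⟩) (l | ⟨⟩)
    · simpa [hf] using hcc j l
    · have hcw : (inner ℂ (c j) w : ℂ) = 0 := by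
        rw [← inner_conj_symm (c j) w, hwc j, map_zero]
      simpa [hf] using hcw
    · simpa [hf] using hwc l
    · simpa [hf] using hww
  have hcard : Fintype.card (Fin (d-1) ⊕ Unit)
      = Module.finrank ℂ (EuclideanSpace ℂ (Fin d)) := by
    rw [finrank_euclideanSpace]
    simp
    omega
  have hspan : (Submodule.span ℂ (Set.range f))ᗮ = ⊥ := by
    have hB : Submodule.span ℂ (Set.range f) = ⊤ := by
      have := (basisOfOrthonormalOfCardEqFinrank hforth hcard).span_eq
      rwa [coe_basisOfOrthonormalOfCardEqFinrank] at this
    rw [hB, Submodule.top_orthogonal_eq_bot]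
  set obE := OrthonormalBasis.mkOfOrthogonalEqBot hforth hspan with hobE
  have hobE_coe : ∀ i, obE i = f i := by
    intro i
    rw [hobE, OrthonormalBasis.coe_of_orthogonal_eq_bot_mk]
  refine ⟨c, hcc, hcsum, ?_⟩
  intro y
  have h := obE.sum_inner_mul_inner y y
  have key : ∀ v : EuclideanSpace ℂ (Fin d),
      (inner ℂ y v : ℂ) * inner ℂ v y = ((‖(inner ℂ v y : ℂ)‖^2 : ℝ):ℂ) := by
    intro v
    rw [← inner_conj_symm y v, mul_comm, Complex.mul_conj, Complex.normSq_eq_norm_sq]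
  simp only [hobE_coe, key, inner_self_eq_norm_sq_to_K] at h
  rw [Fintype.sum_sum_type] at h
  simp only [hf, Sum.elim_inl, Sum.elim_inr, Fintype.sum_unique] at h
  have h' : (∑ j, ‖(inner ℂ (c j) y : ℂ)‖^2) + ‖(inner ℂ w y : ℂ)‖^2 = ‖y‖^2 := by
    have h3 := congrArg Complex.re h
    simpa [Complex.re_sum, ← Complex.ofReal_pow] using h3
  have hwnorm : ‖(inner ℂ w y : ℂ)‖^2 = ‖∑ k, y k‖^2 / d := by
    rw [hwy, norm_mul, mul_pow]
    have : ‖((sd⁻¹:ℝ):ℂ)‖ = sd⁻¹ := by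
      rw [Complex.norm_real, Real.norm_eq_abs, abs_of_pos (inv_pos.mpr hsd0)]
    rw [this]
    rw [show (sd⁻¹)^2 = ((d:ℝ))⁻¹ by rw [← hsd2]; field_simp]
    ring
  rw [hwnorm] at h'
  linarith

set_option maxHeartbeats 1000000 in
theorem stmt_3 (d N : ℕ) (hd : 2 ≤ d)
    (e : Fin N → Fin d → EuclideanSpace ℂ (Fin d))
    (horth : ∀ n, Orthonormal ℂ (e n))
    (hmub : MutuallyUnbiased e)
    (ρ : Matrix (Fin d) (Fin d) ℂ) (hpsd : ρ.PosSemidef) (htr : ρ.trace = 1)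
    (p : Fin N → Fin d → ℝ)
    (hp : ∀ n k, p n k = ((proj (e n k) * ρ).trace).re) :
    ∑ n : Fin N, ∑ k : Fin d, (p n k) ^ 2 ≤ ((ρ * ρ).trace).re + 1 := by
  classical
  obtain ⟨c, hcc, hcsum, hpars⟩ := exists_c d hd
  have hd0 : (0:ℝ) < d := by
    have : 0 < d := by omega
    exact_mod_cast this
  set T : Fin N → Fin d → EuclideanSpace ℂ (Fin d × Fin d) :=
    fun n k => vec d (proj (e n k)) with hT
  set x : EuclideanSpace ℂ (Fin d × Fin d) := vec d ρ with hx
  set idm : EuclideanSpace ℂ (Fin d × Fin d) := vec d 1 with hid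
  have hinner_e : ∀ n k l, (inner ℂ (e n k) (e n l) : ℂ) = if k = l then 1 else 0 :=
    fun n => orthonormal_iff_ite.mp (horth n)
  have hTT_same : ∀ n k l, (inner ℂ (T n k) (T n l) : ℂ) = if k = l then 1 else 0 := by
    intro n k l
    simp only [hT]
    rw [inner_vec_proj_norm, hinner_e]
    by_cases h : k = l <;> simp [h]
  have hTT_diff : ∀ n m, n ≠ m → ∀ k l, (inner ℂ (T n k) (T m l) : ℂ) = ((d:ℂ))⁻¹ := by
    intro n m hnm k l
    simp only [hT]
    rw [inner_vec_proj_norm, hmub n m hnm k l]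
    push_cast
    ring
  have hTid : ∀ n k, (inner ℂ (T n k) idm : ℂ) = 1 := by
    intro n k
    simp only [hT, hid]
    rw [inner_vec_proj_one, hinner_e]
    simp
  have hidT : ∀ n k, (inner ℂ idm (T n k) : ℂ) = 1 := by
    intro n k
    rw [← inner_conj_symm idm (T n k), hTid, map_one]
  have hidid : (inner ℂ idm idm : ℂ) = (d:ℂ) := by
    simp only [hid]
    exact inner_vec_one_one
  have hTx : ∀ n k, (inner ℂ (T n k) x : ℂ) = (proj (e n k) * ρ).trace := by
    intro n k
    simp only [hT, hx]
    exact inner_vec_proj_rho _ _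
  have hidx : (inner ℂ idm x : ℂ) = 1 := by
    simp only [hid, hx]
    rw [inner_vec_one_rho, htr]
  set sd := Real.sqrt d with hsd
  have hsd0 : 0 < sd := Real.sqrt_pos.mpr hd0
  have hsd2 : sd * sd = d := Real.mul_self_sqrt hd0.le
  have hsdC : (sd:ℂ) * (sd:ℂ) = (d:ℂ) := by exact_mod_cast hsd2
  have hsdne : (sd:ℂ) ≠ 0 := by exact_mod_cast hsd0.ne'
  set u : (Fin N × Fin (d-1)) ⊕ Unit → EuclideanSpace ℂ (Fin d × Fin d) :=
    Sum.elim (fun nj => ∑ k, c nj.2 k • T nj.1 k) (fun _ => (((sd⁻¹:ℝ)):ℂ) • idm) with hu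
  have hu_inl_y : ∀ (n : Fin N) (j : Fin (d-1)) (y : EuclideanSpace ℂ (Fin d × Fin d)),
      (inner ℂ (u (Sum.inl (n,j))) y : ℂ)
        = ∑ k, (starRingEnd ℂ) (c j k) * (inner ℂ (T n k) y : ℂ) := by
    intro n j y
    simp only [hu, Sum.elim_inl]
    rw [sum_inner]
    exact Finset.sum_congr rfl fun k _ => inner_smul_left _ _ _
  have hT_u_inl : ∀ (m : Fin N) (l : Fin (d-1)) (n : Fin N) (k : Fin d),
      (inner ℂ (T n k) (u (Sum.inl (m,l))) : ℂ) = ∑ k', c l k' * (inner ℂ (T n k) (T m k') : ℂ) := by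
    intro m l n k
    simp only [hu, Sum.elim_inl]
    rw [inner_sum]
    exact Finset.sum_congr rfl fun k' _ => inner_smul_right _ _ _
  have hu_orth : Orthonormal ℂ u := by
    rw [orthonormal_iff_ite]
    rintro (⟨n, j⟩ | ⟨⟩) (⟨m, l⟩ | ⟨⟩)
    · rw [hu_inl_y]
      simp only [hT_u_inl]
      by_cases hnm : n = m
      · subst hnm
        have h1 : ∀ k, (∑ k', c l k' * (inner ℂ (T n k) (T n k') : ℂ)) = c l k := by
          intro k
          rw [Finset.sum_congr rfl fun k' _ => by rw [hTT_same n k k']]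
          simp
        rw [Finset.sum_congr rfl fun k _ => by rw [h1 k]]
        have h2 : (∑ k, (starRingEnd ℂ) (c j k) * c l k) = (inner ℂ (c j) (c l) : ℂ) := by
          simp [PiLp.inner_apply, RCLike.inner_apply, mul_comm]
        rw [h2, hcc]
        by_cases hjl : j = l <;> simp [hjl]
      · have h1 : ∀ k, (∑ k', c l k' * (inner ℂ (T n k) (T m k') : ℂ)) = 0 := by
          intro k
          rw [Finset.sum_congr rfl fun k' _ => by rw [hTT_diff n m hnm k k']]
          rw [← Finset.sum_mul, hcsum l, zero_mul]
        rw [Finset.sum_congr rfl fun k _ => by rw [h1 k]]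
        simp [hnm]
    · rw [hu_inl_y]
      have h1 : ∀ k, (inner ℂ (T n k) (u (Sum.inr ())) : ℂ) = ((sd⁻¹:ℝ):ℂ) := by
        intro k
        simp only [hu, Sum.elim_inr]
        rw [inner_smul_right, hTid, mul_one]
      rw [Finset.sum_congr rfl fun k _ => by rw [h1 k]]
      rw [← Finset.sum_mul, ← map_sum, hcsum j, map_zero, zero_mul]
      simp
    · have h0 : (inner ℂ (u (Sum.inr ())) (u (Sum.inl (m, l))) : ℂ) = 0 := by
        rw [← inner_conj_symm (u (Sum.inr ())) (u (Sum.inl (m, l)))]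
        rw [hu_inl_y]
        have h1 : ∀ k, (inner ℂ (T m k) (u (Sum.inr ())) : ℂ) = ((sd⁻¹:ℝ):ℂ) := by
          intro k
          simp only [hu, Sum.elim_inr]
          rw [inner_smul_right, hTid, mul_one]
        rw [Finset.sum_congr rfl fun k _ => by rw [h1 k]]
        rw [← Finset.sum_mul, ← map_sum, hcsum l, map_zero, zero_mul, map_zero]
      rw [h0]
      simp
    · simp only [hu, Sum.elim_inr]
      rw [inner_smul_right, inner_smul_left, hidid, Complex.conj_ofReal]
      push_cast
      rw [show ((sd:ℂ))⁻¹ * (((sd:ℂ))⁻¹ * (d:ℂ)) = ((sd:ℂ) * (sd:ℂ))⁻¹ * (d:ℂ) by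
        rw [mul_inv]; ring, hsdC]
      exact inv_mul_cancel₀ (by exact_mod_cast hd0.ne')
  -- cardinality bound
  have hcard := hu_orth.linearIndependent.fintype_card_le_finrank
  rw [finrank_euclideanSpace] at hcard
  simp only [Fintype.card_sum, Fintype.card_prod, Fintype.card_fin, Fintype.card_unit,
    Fintype.card_prod] at hcard
  have hNnat : N ≤ d + 1 := by
    obtain ⟨m, rfl⟩ : ∃ m, d = m + 2 := ⟨d - 2, by omega⟩
    by_contra hcon
    push_neg at hcon
    have hd1 : m + 2 - 1 = m + 1 := by omega
    rw [hd1] at hcard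
    have h1 : (m + 4) * (m + 1) ≤ N * (m + 1) :=
      Nat.mul_le_mul_right _ (by omega)
    nlinarith [hcard, h1]
  have hN : (N:ℝ) ≤ (d:ℝ) + 1 := by exact_mod_cast hNnat
  -- Bessel
  have hbes := hu_orth.sum_inner_products_le (s := Finset.univ) x
  rw [Fintype.sum_sum_type, Fintype.sum_prod_type] at hbes
  -- values of inner ℂ products with x
  set tv : Fin N → EuclideanSpace ℂ (Fin d) :=
    fun n => WithLp.toLp 2 (fun k => (proj (e n k) * ρ).trace) with htv
  have hux : ∀ n j, (inner ℂ (u (Sum.inl (n,j))) x : ℂ) = (inner ℂ (c j) (tv n) : ℂ) := by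
    intro n j
    rw [hu_inl_y]
    have h1 : (inner ℂ (c j) (tv n) : ℂ) = ∑ k, (starRingEnd ℂ) (c j k) * tv n k := by
      simp [PiLp.inner_apply, RCLike.inner_apply, mul_comm]
    rw [h1]
    exact Finset.sum_congr rfl fun k _ => by rw [hTx n k]
  have huxr : ∀ z : Unit, (inner ℂ (u (Sum.inr z)) x : ℂ) = ((sd⁻¹:ℝ):ℂ) := by
    intro z
    simp only [hu, Sum.elim_inr]
    rw [inner_smul_left, hidx, mul_one, Complex.conj_ofReal]
  have huxr_norm : ∀ z : Unit, ‖(inner ℂ (u (Sum.inr z)) x : ℂ)‖^2 = ((d:ℝ))⁻¹ := by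
    intro z
    rw [huxr z, Complex.norm_real, Real.norm_eq_abs, abs_of_pos (inv_pos.mpr hsd0)]
    rw [← hsd2]
    field_simp
  -- resolution of the identity
  have hres : ∀ n, (∑ k, proj (e n k)) = (1 : Matrix (Fin d) (Fin d) ℂ) := by
    intro n
    set A : Matrix (Fin d) (Fin d) ℂ := Matrix.of (fun i k => e n k i) with hA
    have hAHA : A.conjTranspose * A = 1 := by
      ext k l
      rw [Matrix.mul_apply, Matrix.one_apply]
      have := hinner_e n k l
      simp only [PiLp.inner_apply, RCLike.inner_apply] at this
      simpa [hA, Matrix.conjTranspose_apply, mul_comm] using this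
    have hAAH : A * A.conjTranspose = 1 := mul_eq_one_comm.mp hAHA
    ext i i'
    have := congrFun (congrFun hAAH i) i'
    rw [Matrix.mul_apply] at this
    simpa [proj, hA, Matrix.sum_apply, Matrix.of_apply, Matrix.conjTranspose_apply,
      mul_comm] using this
  have htvsum : ∀ n, (∑ k, tv n k) = 1 := by
    intro n
    simp only [htv]
    rw [← Matrix.trace_sum]
    rw [show (∑ k, proj (e n k) * ρ) = (∑ k, proj (e n k)) * ρ from (Finset.sum_mul _ _ _).symm]
    rw [hres n, one_mul, htr]
  -- Parseval per n
  have hpn : ∀ n, ∑ j, ‖(inner ℂ (c j) (tv n) : ℂ)‖^2 = ‖tv n‖^2 - ((d:ℝ))⁻¹ := by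
    intro n
    rw [hpars (tv n), htvsum n]
    norm_num
  -- norm of tv n
  have htvnorm : ∀ n, ‖tv n‖^2 = ∑ k, ‖tv n k‖^2 := by
    intro n
    rw [EuclideanSpace.norm_eq, Real.sq_sqrt]
    positivity
  -- pointwise bound
  have hre_le : ∀ z : ℂ, (z.re)^2 ≤ ‖z‖^2 := by
    intro z
    rw [Complex.sq_norm, Complex.normSq_apply]
    nlinarith [sq_nonneg z.im]
  have hpk : ∀ n k, (p n k)^2 ≤ ‖tv n k‖^2 := by
    intro n k
    rw [hp n k]
    exact hre_le _
  -- norm of x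
  have hconjρ : ∀ i j, (starRingEnd ℂ) (ρ i j) = ρ j i := by
    intro i j
    have := hpsd.1
    have h2 := congrFun (congrFun this j) i
    rw [Matrix.conjTranspose_apply] at h2
    exact h2
  have hxnorm : ‖x‖^2 = ((ρ * ρ).trace).re := by
    have h1 : (inner ℂ x x : ℂ) = (ρ * ρ).trace := by
      simp only [hx]
      rw [inner_vec]
      simp only [Matrix.trace, Matrix.diag, Matrix.mul_apply]
      rw [Finset.sum_comm]
      refine Finset.sum_congr rfl fun j _ => Finset.sum_congr rfl fun i _ => ?_
      rw [show ρ j i = (starRingEnd ℂ) (ρ i j) from (hconjρ i j).symm]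
      try ring
    have h2 := inner_self_eq_norm_sq (𝕜 := ℂ) x
    rw [h1] at h2
    simpa [RCLike.re_to_complex] using h2.symm
  -- assemble
  have hsplit : ∀ n j, ‖(inner ℂ (u (Sum.inl (n,j))) x : ℂ)‖^2 = ‖(inner ℂ (c j) (tv n) : ℂ)‖^2 := by
    intro n j
    rw [hux]
  have hbes2 : (∑ n, ∑ j, ‖(inner ℂ (c j) (tv n) : ℂ)‖^2) + ((d:ℝ))⁻¹ ≤ ‖x‖^2 := by
    have h2 := hbes
    simp only [hsplit, huxr_norm] at h2
    simp only [Finset.sum_const, Finset.card_univ, Fintype.card_unit, one_smul] at h2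
    exact h2
  have hmain : ∀ n, ∑ k, (p n k)^2 ≤ (∑ j, ‖(inner ℂ (c j) (tv n) : ℂ)‖^2) + ((d:ℝ))⁻¹ := by
    intro n
    have h1 : ∑ k, (p n k)^2 ≤ ∑ k, ‖tv n k‖^2 :=
      Finset.sum_le_sum fun k _ => hpk n k
    have h2 := htvnorm n
    have h3 := hpn n
    linarith
  calc ∑ n, ∑ k, (p n k)^2
      ≤ ∑ n, ((∑ j, ‖(inner ℂ (c j) (tv n) : ℂ)‖^2) + ((d:ℝ))⁻¹) :=
        Finset.sum_le_sum fun n _ => hmain n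
    _ = (∑ n, ∑ j, ‖(inner ℂ (c j) (tv n) : ℂ)‖^2) + (N:ℝ) * ((d:ℝ))⁻¹ := by
        rw [Finset.sum_add_distrib, Finset.sum_const, Finset.card_univ, Fintype.card_fin,
          nsmul_eq_mul]
    _ ≤ ‖x‖^2 - ((d:ℝ))⁻¹ + (N:ℝ) * ((d:ℝ))⁻¹ := by linarith
    _ ≤ ((ρ * ρ).trace).re + 1 := by
        have h3 : (N:ℝ) * ((d:ℝ))⁻¹ ≤ ((d:ℝ) + 1) * ((d:ℝ))⁻¹ :=
          mul_le_mul_of_nonneg_right hN (by positivity)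
        have h4 : ((d:ℝ) + 1) * ((d:ℝ))⁻¹ = 1 + ((d:ℝ))⁻¹ := by field_simp
        have h5 : ((d:ℝ))⁻¹ > 0 := by positivity
        linarith [hxnorm.le, hxnorm.ge]
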